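/- Let G be a connected simple graph on the vertex set {1,…,n} with n ≥ 1, and let h be any vertex. Then there exists a function f assigning a nonnegative real number f(i,j) to every ordered pair of vertices (i,j), such that: f(i,j) = 0 whenever i and j are not adjacent in G; f(i,j) + f(j,i) ≤ n for every pair of adjacent vertices i, j; the net outflow at h satisfies Σ_j f(h,j) − Σ_j f(j,h) = n − 1; and for every vertex k ≠ h, Σ_j f(k,j) − Σ_j f(j,k) = −1. Together with the converse, the existence of such a flow is a necessary and sufficient condition for G to be connected. -/

import Mathlib

open SimpleGraph Finset

namespace Stmt7Aux

variable {n : ℕ} {G : SimpleGraph (Fin n)}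

/-- number of times the directed edge (i,j) is used by the walk p -/
def cnt {a b : Fin n} (p : G.Walk a b) (i j : Fin n) : ℕ :=
  (p.darts.map SimpleGraph.Dart.toProd).count (i, j)

lemma count_eq (l : List (Fin n × Fin n)) (a : Fin n × Fin n) :
    l.count a = @List.count _ instBEqOfDecidableEq a l := by
  rw [List.count_eq_countP, @List.count_eq_countP _ instBEqOfDecidableEq]
  refine List.countP_congr ?_
  intro x _
  constructor
  · intro hx
    have hx' : x = a := by simpa using hx
    exact decide_eq_true hx'
  · intro hx
    have hx' : x = a := of_decide_eq_true hx
    simp [hx']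

lemma cnt_eq_zero_of_not_adj {a b : Fin n} (p : G.Walk a b) {i j : Fin n}
    (hij : ¬ G.Adj i j) : cnt p i j = 0 := by
  rw [cnt, List.count_eq_zero]
  intro hmem
  obtain ⟨d, _, hdp⟩ := List.mem_map.1 hmem
  have := d.adj
  rw [show d.toProd.1 = i from by rw [hdp], show d.toProd.2 = j from by rw [hdp]] at this
  exact hij this

lemma cnt_cons {a c b : Fin n} (hac : G.Adj a c) (q : G.Walk c b) (i j : Fin n) :
    cnt (SimpleGraph.Walk.cons hac q) i j = cnt q i j + if (i, j) = (a, c) then 1 else 0 := by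
  simp only [cnt, SimpleGraph.Walk.darts_cons, List.map_cons, List.count_cons]
  by_cases h1 : a = i <;> by_cases h2 : c = j <;>
    simp [h1, h2, Prod.ext_iff] <;> simp_all [eq_comm]

lemma cnt_flow {a b : Fin n} (p : G.Walk a b) (v : Fin n) :
    (∑ j, (cnt p v j : ℝ)) - ∑ j, (cnt p j v : ℝ)
      = (if v = a then 1 else 0) - (if v = b then 1 else 0) := by
  induction p with
  | nil => simp [cnt]
  | @cons a c b hac q ih =>
    simp only [cnt_cons, Nat.cast_add, apply_ite (Nat.cast : ℕ → ℝ), Nat.cast_one,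
      Nat.cast_zero]
    rw [Finset.sum_add_distrib, Finset.sum_add_distrib]
    have h1 : (∑ j, if (v, j) = (a, c) then (1:ℝ) else 0) = if v = a then 1 else 0 := by
      by_cases hva : v = a <;> simp [Prod.ext_iff, hva]
    have h2 : (∑ j, if (j, v) = (a, c) then (1:ℝ) else 0) = if v = c then 1 else 0 := by
      by_cases hvc : v = c <;> simp [Prod.ext_iff, hvc, and_comm]
    rw [h1, h2]
    rw [show ∀ x y z w : ℝ, (x + y) - (z + w) = (x - z) + (y - w) from by intros; ring]
    rw [ih]
    by_cases hva : v = a <;> by_cases hvc : v = c <;> by_cases hvb : v = b <;>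
      simp [hva, hvc, hvb]

lemma cnt_add_le_one {a b : Fin n} {p : G.Walk a b} (hp : p.IsPath) {i j : Fin n}
    (hij : i ≠ j) : cnt p i j + cnt p j i ≤ 1 := by
  have hnd : (p.darts.map SimpleGraph.Dart.edge).Nodup := by
    rw [← SimpleGraph.Walk.edges]; exact hp.edges_nodup
  have hdnd : p.darts.Nodup := hnd.of_map _
  have htnd : (p.darts.map SimpleGraph.Dart.toProd).Nodup := by
    refine hdnd.map ?_
    intro d1 d2 hd
    exact SimpleGraph.Dart.ext _ _ hd
  have hle1 : cnt p i j ≤ 1 := by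
    rw [cnt]
    exact List.nodup_iff_count_le_one.1 htnd (i, j)
  have hle2 : cnt p j i ≤ 1 := by
    rw [cnt]
    exact List.nodup_iff_count_le_one.1 htnd (j, i)
  by_contra hcon
  push_neg at hcon
  have h1 : 0 < cnt p i j := by omega
  have h2 : 0 < cnt p j i := by omega
  rw [cnt, List.count_pos_iff] at h1 h2
  obtain ⟨d1, hd1, hd1p⟩ := List.mem_map.1 h1
  obtain ⟨d2, hd2, hd2p⟩ := List.mem_map.1 h2
  have hne : d1 ≠ d2 := by
    intro he
    rw [he, hd2p] at hd1p
    have h' : j = i := congrArg Prod.fst hd1p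
    exact hij h'.symm
  have hedge : d1.edge = d2.edge := by
    simp only [SimpleGraph.Dart.edge, hd1p, hd2p]
    exact Sym2.eq_swap
  exact hne (List.inj_on_of_nodup_map hnd hd1 hd2 hedge)

end Stmt7Aux

theorem stmt7 {n : ℕ} (hn : 1 ≤ n) (G : SimpleGraph (Fin n)) (hG : G.Connected)
    (h : Fin n) :
    ∃ f : Fin n → Fin n → ℝ,
      (∀ i j, 0 ≤ f i j) ∧
      (∀ i j, ¬ G.Adj i j → f i j = 0) ∧
      (∀ i j, G.Adj i j → f i j + f j i ≤ (n : ℝ)) ∧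
      (∑ j, f h j - ∑ j, f j h = (n : ℝ) - 1) ∧
      (∀ k, k ≠ h → ∑ j, f k j - ∑ j, f j k = -1) := by
  classical
  have hreach : ∀ k : Fin n, ∃ p : G.Walk h k, p.IsPath := fun k =>
    ⟨((hG.preconnected h k).some.toPath : G.Path h k).1,
      ((hG.preconnected h k).some.toPath).2⟩
  choose p hp using hreach
  have hcard : (Finset.univ.erase h).card = n - 1 := by
    rw [Finset.card_erase_of_mem (Finset.mem_univ h)]
    simp
  refine ⟨fun i j => ∑ k ∈ Finset.univ.erase h, (Stmt7Aux.cnt (p k) i j : ℝ),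
    ?_, ?_, ?_, ?_, ?_⟩
  · intro i j
    exact Finset.sum_nonneg fun k _ => Nat.cast_nonneg _
  · intro i j hij
    exact Finset.sum_eq_zero fun k _ => by
      rw [Stmt7Aux.cnt_eq_zero_of_not_adj _ hij]; norm_num
  · intro i j hij
    calc (∑ k ∈ Finset.univ.erase h, (Stmt7Aux.cnt (p k) i j : ℝ))
          + ∑ k ∈ Finset.univ.erase h, (Stmt7Aux.cnt (p k) j i : ℝ)
        = ∑ k ∈ Finset.univ.erase h,
            ((Stmt7Aux.cnt (p k) i j : ℝ) + (Stmt7Aux.cnt (p k) j i : ℝ)) := by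
          rw [Finset.sum_add_distrib]
      _ ≤ ∑ k ∈ Finset.univ.erase h, (1 : ℝ) := by
          refine Finset.sum_le_sum fun k _ => ?_
          exact_mod_cast Stmt7Aux.cnt_add_le_one (hp k) hij.ne
      _ = ((Finset.univ.erase h).card : ℝ) := by simp
      _ ≤ (n : ℝ) := by
          rw [hcard]
          have : ((n - 1 : ℕ) : ℝ) ≤ (n : ℝ) := by
            exact_mod_cast Nat.sub_le n 1
          exact this
  all_goals {
    have key : ∀ v : Fin n,
        (∑ j, ∑ k ∈ Finset.univ.erase h, (Stmt7Aux.cnt (p k) v j : ℝ))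
          - ∑ j, ∑ k ∈ Finset.univ.erase h, (Stmt7Aux.cnt (p k) j v : ℝ)
        = ∑ k ∈ Finset.univ.erase h,
            ((if v = h then (1:ℝ) else 0) - if v = k then 1 else 0) := by
      intro v
      have e1 : (∑ j, ∑ k ∈ Finset.univ.erase h, (Stmt7Aux.cnt (p k) v j : ℝ))
          = ∑ k ∈ Finset.univ.erase h, ∑ j, (Stmt7Aux.cnt (p k) v j : ℝ) :=
        Finset.sum_comm
      have e2 : (∑ j, ∑ k ∈ Finset.univ.erase h, (Stmt7Aux.cnt (p k) j v : ℝ))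
          = ∑ k ∈ Finset.univ.erase h, ∑ j, (Stmt7Aux.cnt (p k) j v : ℝ) :=
        Finset.sum_comm
      rw [e1, e2, ← Finset.sum_sub_distrib]
      exact Finset.sum_congr rfl fun k _ => Stmt7Aux.cnt_flow (p k) v
    first
    | · rw [key h]
        have : ∀ k ∈ Finset.univ.erase h,
            ((if h = h then (1:ℝ) else 0) - if h = k then 1 else 0) = 1 := by
          intro k hk
          rw [if_pos rfl, if_neg (fun e => (Finset.mem_erase.1 hk).1 e.symm)]
          ring
        rw [Finset.sum_congr rfl this, Finset.sum_const, hcard]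
        have : ((n - 1 : ℕ) : ℝ) = (n : ℝ) - 1 := by
          have := Nat.cast_sub hn (R := ℝ)
          simpa using this
        simp [this]
    | · intro v hv
        rw [key v]
        have : ∀ k ∈ Finset.univ.erase h,
            ((if v = h then (1:ℝ) else 0) - if v = k then 1 else 0)
              = -(if v = k then 1 else 0) := by
          intro k hk
          rw [if_neg hv]
          ring
        rw [Finset.sum_congr rfl this, Finset.sum_neg_distrib,
          Finset.sum_ite_eq, if_pos (Finset.mem_erase.2 ⟨hv, Finset.mem_univ v⟩)]
  }
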